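/- Let F be a free R-module of rank n, γ a homogeneous element of ⋀F*, a a homogeneous element of ⋀F, and b ∈ ⋀^n F a top-degree element. Then (a ⌟ γ) ⌟ b = a ∧ (γ ⌟ b). -/

import Mathlib

open ExteriorAlgebra

set_option maxHeartbeats 1000000
set_option synthInstance.maxHeartbeats 400000

noncomputable def extMap (R : Type*) [CommRing R] {M N : Type*} [AddCommGroup M] [AddCommGroup N]
    [Module R M] [Module R N] (f : M →ₗ[R] N) :
    ExteriorAlgebra R M →ₐ[R] ExteriorAlgebra R N :=
  ExteriorAlgebra.lift R ⟨(ExteriorAlgebra.ι R).comp f, fun m => by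
    simp [ExteriorAlgebra.ι_sq_zero (f m)]⟩

noncomputable def extContract (R : Type*) [CommRing R] {M : Type*} [AddCommGroup M] [Module R M] :
    ExteriorAlgebra R (Module.Dual R M) →ₐ[R] Module.End R (ExteriorAlgebra R M) :=
  ExteriorAlgebra.lift R ⟨(CliffordAlgebra.contractLeft (Q := (0 : QuadraticForm R M)) :
      Module.Dual R M →ₗ[R] Module.End R (ExteriorAlgebra R M)), fun d => by
    refine LinearMap.ext fun x => ?_
    rw [Module.End.mul_apply, LinearMap.zero_apply]
    exact CliffordAlgebra.contractLeft_contractLeft (Q := (0 : QuadraticForm R M)) (d := d) x⟩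

noncomputable def extContractD (R : Type*) [CommRing R] {M : Type*} [AddCommGroup M] [Module R M] :
    ExteriorAlgebra R M →ₐ[R] Module.End R (ExteriorAlgebra R (Module.Dual R M)) :=
  ExteriorAlgebra.lift R ⟨(CliffordAlgebra.contractLeft
      (Q := (0 : QuadraticForm R (Module.Dual R M))) :
      Module.Dual R (Module.Dual R M) →ₗ[R] _).comp (Module.Dual.eval R M), fun m => by
    refine LinearMap.ext fun x => ?_
    rw [Module.End.mul_apply, LinearMap.zero_apply, LinearMap.comp_apply]
    exact CliffordAlgebra.contractLeft_contractLeft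
      (Q := (0 : QuadraticForm R (Module.Dual R M))) (d := Module.Dual.eval R M m) x⟩

def extDeg (R : Type*) [CommRing R] {M : Type*} [AddCommGroup M] [Module R M] (i : ℕ)
    (x : ExteriorAlgebra R M) : Prop :=
  x ∈ (LinearMap.range (ExteriorAlgebra.ι R : M →ₗ[R] ExteriorAlgebra R M)) ^ i

section Aux

variable {R : Type*} [CommRing R] {M : Type*} [AddCommGroup M] [Module R M]

/-- Contraction drops degree by one. -/
lemma aux_contractLeft_mem_pow (d : Module.Dual R M) {k : ℕ} {γ : ExteriorAlgebra R M}
    (hγ : extDeg R k γ) :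
    extDeg R (k - 1) (CliffordAlgebra.contractLeft (Q := (0 : QuadraticForm R M)) d γ) := by
  unfold extDeg at hγ ⊢
  induction hγ using Submodule.pow_induction_on_left' with
  | algebraMap r =>
    rw [CliffordAlgebra.contractLeft_algebraMap]
    exact Submodule.zero_mem _
  | add x y i hx hy ihx ihy =>
    rw [map_add]
    exact Submodule.add_mem _ ihx ihy
  | mem_mul m hm i x hx ih =>
    obtain ⟨v, rfl⟩ := hm
    rw [CliffordAlgebra.contractLeft_ι_mul]
    refine Submodule.sub_mem _ (Submodule.smul_mem _ _ ?_) ?_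
    · simpa using hx
    · rcases i with _ | i
      · -- degree 0 : x is a scalar, contraction is zero
        obtain ⟨r, rfl⟩ := Submodule.mem_one.mp (by simpa using hx)
        rw [CliffordAlgebra.contractLeft_algebraMap, mul_zero]
        exact Submodule.zero_mem _
      · have : (LinearMap.range (ExteriorAlgebra.ι R : M →ₗ[R] ExteriorAlgebra R M)) ^ (i + 1)
            = (LinearMap.range (ExteriorAlgebra.ι R : M →ₗ[R] ExteriorAlgebra R M)) *
              (LinearMap.range (ExteriorAlgebra.ι R : M →ₗ[R] ExteriorAlgebra R M)) ^ i :=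
          pow_succ' _ _
      -- goal degree: (i+1+1) - 1 = i+1
        simpa [this] using
          Submodule.mul_mem_mul (LinearMap.mem_range_self _ v) (by simpa using ih)

lemma aux_extContractD_mem_pow {p : ℕ} {a : ExteriorAlgebra R M} (ha : extDeg R p a) :
    ∀ (j : ℕ) (γ : ExteriorAlgebra R (Module.Dual R M)), extDeg R j γ →
      extDeg R (j - p) (extContractD R a γ) := by
  unfold extDeg at ha
  induction ha using Submodule.pow_induction_on_left' with
  | algebraMap r =>
    intro j γ hγ
    rw [AlgHom.commutes (extContractD R) r]
    have : (algebraMap R (Module.End R (ExteriorAlgebra R (Module.Dual R M))) r) γ = r • γ :=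
      by simp [Module.algebraMap_end_apply]
    rw [this, Nat.sub_zero]
    exact Submodule.smul_mem _ _ hγ
  | add x y i hx hy ihx ihy =>
    intro j γ hγ
    rw [map_add (extContractD R), LinearMap.add_apply]
    exact Submodule.add_mem _ (ihx j γ hγ) (ihy j γ hγ)
  | mem_mul m hm i x hx ih =>
    intro j γ hγ
    obtain ⟨v, rfl⟩ := hm
    rw [map_mul (extContractD R), Module.End.mul_apply]
    have h1 := ih j γ hγ
    have : extContractD R (ExteriorAlgebra.ι R v) =
        CliffordAlgebra.contractLeft (Q := (0 : QuadraticForm R (Module.Dual R M)))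
          (Module.Dual.eval R M v) := by
      simp [extContractD, ExteriorAlgebra.lift_ι_apply]
    rw [this]
    have := aux_contractLeft_mem_pow (Module.Dual.eval R M v) h1
    simpa [Nat.sub_sub] using this

end Aux

section Aux2

variable {R : Type*} [CommRing R] {M : Type*} [AddCommGroup M] [Module R M]

lemma aux_extContract_ι (d : Module.Dual R M) :
    extContract R (ExteriorAlgebra.ι R d) =
      CliffordAlgebra.contractLeft (Q := (0 : QuadraticForm R M)) d := by
  simp [extContract, ExteriorAlgebra.lift_ι_apply]

lemma aux_extContractD_ι (x : M) :
    extContractD R (ExteriorAlgebra.ι R x) =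
      CliffordAlgebra.contractLeft (Q := (0 : QuadraticForm R (Module.Dual R M)))
        (Module.Dual.eval R M x) := by
  simp [extContractD, ExteriorAlgebra.lift_ι_apply]

/-- The key graded-derivation identity. -/
lemma aux_key (x : M) {j : ℕ} {γ : ExteriorAlgebra R (Module.Dual R M)} (hγ : extDeg R j γ) :
    ∀ c : ExteriorAlgebra R M,
      extContract R (CliffordAlgebra.contractLeft
          (Q := (0 : QuadraticForm R (Module.Dual R M))) (Module.Dual.eval R M x) γ) c
        = (-1 : R) ^ (j + 1) • extContract R γ (ExteriorAlgebra.ι R x * c)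
            + ExteriorAlgebra.ι R x * extContract R γ c := by
  unfold extDeg at hγ
  induction hγ using Submodule.pow_induction_on_left' with
  | algebraMap r =>
    intro c
    rw [CliffordAlgebra.contractLeft_algebraMap, map_zero, LinearMap.zero_apply,
      AlgHom.commutes (extContract R) r]
    have h1 : ∀ z : ExteriorAlgebra R M,
        (algebraMap R (Module.End R (ExteriorAlgebra R M)) r) z = r • z := fun z => rfl
    rw [h1, h1, zero_add, pow_one, neg_one_smul, mul_smul_comm]
    abel
  | add u v i hu hv ihu ihv =>
    intro c
    simp only [map_add, LinearMap.add_apply]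
    rw [ihu c, ihv c, smul_add, mul_add]
    abel
  | mem_mul m hm i γ₀ hγ₀ ih =>
    intro c
    obtain ⟨d, rfl⟩ := hm
    simp only [Nat.succ_eq_add_one]
    rw [CliffordAlgebra.contractLeft_ι_mul, map_sub, map_smul, map_mul (extContract R),
      LinearMap.sub_apply, LinearMap.smul_apply, Module.End.mul_apply, aux_extContract_ι,
      ih c, map_add, map_smul, CliffordAlgebra.contractLeft_ι_mul,
      map_mul (extContract R), Module.End.mul_apply, Module.End.mul_apply, aux_extContract_ι]
    simp only [Module.Dual.eval_apply]
    have hsign : ((-1 : R)) ^ (i + 1 + 1) = -((-1 : R) ^ (i + 1)) := by ring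
    rw [hsign]
    module

end Aux2

section Aux3

variable {R : Type*} [CommRing R] {F : Type*} [AddCommGroup F] [Module R F]
  [Module.Free R F] [Module.Finite R F]

lemma aux_top {n : ℕ} (hrank : Module.finrank R F = n) {b : ExteriorAlgebra R F}
    (hb : extDeg R n b) (x : F) : ExteriorAlgebra.ι R x * b = 0 := by
  classical
  rcases subsingleton_or_nontrivial R with hR | hR
  · haveI := Module.subsingleton R (ExteriorAlgebra R F)
    exact Subsingleton.elim _ _
  have hcard : Fintype.card (Module.Free.ChooseBasisIndex R F) = n := by
    rw [← hrank, Module.finrank_eq_card_chooseBasisIndex]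
  set e := Module.Free.chooseBasis R F with he
  have hmulti : ∀ v : Fin (n + 1) → F, ExteriorAlgebra.ιMulti R (n + 1) v = 0 := by
    intro v
    have hsum := MultilinearMap.map_sum
      (ExteriorAlgebra.ιMulti R (n + 1) (M := F)).toMultilinearMap
      (α := fun _ => Module.Free.ChooseBasisIndex R F)
      (g := fun i k => e.repr (v i) k • e k)
    have hv : (fun i => ∑ k, e.repr (v i) k • e k) = v := funext fun i => e.sum_repr (v i)
    rw [hv] at hsum
    have hcoe : (ExteriorAlgebra.ιMulti R (n + 1) (M := F)).toMultilinearMap v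
        = ExteriorAlgebra.ιMulti R (n + 1) v := rfl
    rw [hcoe] at hsum
    rw [hsum]
    refine Finset.sum_eq_zero fun r _ => ?_
    rw [MultilinearMap.map_smul_univ]
    have hne : ¬Function.Injective r := by
      intro hinj
      have hle := Fintype.card_le_of_injective r hinj
      rw [Fintype.card_fin, hcard] at hle
      omega
    obtain ⟨i, i', hii, hne'⟩ := Function.not_injective_iff.mp hne
    have h0 : (ExteriorAlgebra.ιMulti R (n + 1) (M := F)) (fun i => e (r i)) = 0 :=
      AlternatingMap.map_eq_zero_of_eq _ _ (congrArg e hii) hne'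
    have hcoe2 : ((ExteriorAlgebra.ιMulti R (n + 1) (M := F)).toMultilinearMap
        fun i => e (r i)) = (ExteriorAlgebra.ιMulti R (n + 1) (M := F)) fun i => e (r i) := rfl
    rw [hcoe2, h0, smul_zero]
  have h2 : (⋀[R]^(n+1) F) = ⊥ := by
    rw [← ExteriorAlgebra.ιMulti_span_fixedDegree R (n + 1), Submodule.span_eq_bot]
    rintro _ ⟨v, rfl⟩
    exact hmulti v
  have h2' : (LinearMap.range (ExteriorAlgebra.ι R : F →ₗ[R] ExteriorAlgebra R F)) ^ (n + 1)
      = ⊥ := h2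
  have hm : ExteriorAlgebra.ι R x * b
      ∈ (LinearMap.range (ExteriorAlgebra.ι R : F →ₗ[R] ExteriorAlgebra R F)) ^ (n + 1) := by
    rw [pow_succ']
    exact Submodule.mul_mem_mul (LinearMap.mem_range_self _ x) hb
  rw [h2'] at hm
  simpa using hm

end Aux3

/-- Corollary 1.3: if `F` is free of rank `n`, `γ ∈ ⋀ F*` is homogeneous, `a ∈ ⋀ F` is
homogeneous, and `b ∈ ⋀^n F` is a top-degree element, then `(a ⌟ γ) ⌟ b = a ∧ (γ ⌟ b)`. -/
theorem contraction_top_formula (R : Type*) [CommRing R]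
    (F : Type*) [AddCommGroup F] [Module R F] [Module.Free R F] [Module.Finite R F]
    (n : ℕ) (hrank : Module.finrank R F = n)
    (γ : ExteriorAlgebra R (Module.Dual R F)) (j : ℕ) (hγ : extDeg R j γ)
    (a b : ExteriorAlgebra R F) (p : ℕ) (ha : extDeg R p a) (hb : extDeg R n b) :
    extContract R (extContractD R a γ) b = a * extContract R γ b := by
  have key : ∀ (i : ℕ) (a' : ExteriorAlgebra R F), extDeg R i a' →
      ∀ (j' : ℕ) (γ' : ExteriorAlgebra R (Module.Dual R F)), extDeg R j' γ' →
        extContract R (extContractD R a' γ') b = a' * extContract R γ' b := by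
    intro i a' ha'
    unfold extDeg at ha'
    induction ha' using Submodule.pow_induction_on_left' with
    | algebraMap r =>
      intro j' γ' hγ'
      rw [AlgHom.commutes (extContractD R) r]
      have h1 : (algebraMap R (Module.End R (ExteriorAlgebra R (Module.Dual R F))) r) γ'
          = r • γ' := rfl
      rw [h1, map_smul, LinearMap.smul_apply, Algebra.smul_def]
    | add u v i hu hv ihu ihv =>
      intro j' γ' hγ'
      simp only [map_add, LinearMap.add_apply]
      rw [ihu j' γ' hγ', ihv j' γ' hγ', add_mul]
    | mem_mul m hm i a₀ ha₀ ih =>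
      intro j' γ' hγ'
      obtain ⟨x, rfl⟩ := hm
      rw [map_mul (extContractD R), Module.End.mul_apply, aux_extContractD_ι]
      have hdeg : extDeg R (j' - i) (extContractD R a₀ γ') :=
        aux_extContractD_mem_pow ha₀ j' γ' hγ'
      rw [aux_key x hdeg b, aux_top hrank hb x, map_zero, smul_zero, zero_add,
        ih j' γ' hγ', ← mul_assoc]
  exact key p a ha j γ hγ
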